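/- The theory T_2n is smooth: for every quantifier-free Σ_P-formula φ, every model A of T_2n with a valuation satisfying φ, and every cardinal κ ≥ |A|, there is a model B of T_2n with a valuation satisfying φ such that |B| = κ. -/

import Mathlib

open FirstOrder FirstOrder.Language

/-- The signature Σ_P with a single unary predicate symbol `P`. -/
def LP : FirstOrder.Language :=
  ⟨fun _ => Empty, fun n => match n with | 1 => Unit | _ => Empty⟩

/-- The unary predicate symbol of `LP`. -/
def PSymb : LP.Relations 1 := Unit.unit

/-- The interpretation of the predicate symbol `P` in an `LP`-structure. -/
def PPred (M : Type) (inst : LP.Structure M) (a : M) : Prop :=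
  inst.RelMap PSymb ![a]

/-- Realization of a formula, with the structure instance given explicitly. -/
def RealizeP {α : Type} (M : Type) (inst : LP.Structure M) (φ : LP.Formula α) (v : α → M) : Prop :=
  letI := inst
  φ.Realize v

/-- `M` is a model of T_2n, axiomatized by `{ψ_n^P → ψ_{≥2n} : n ≥ 1}`: if there are at
least `n` distinct elements satisfying `P`, then there are at least `2n` elements. -/
def ModelT2n (M : Type) (inst : LP.Structure M) : Prop :=
  ∀ n : ℕ, 1 ≤ n →
    (∃ x : Fin n → M, Function.Injective x ∧ ∀ i, PPred M inst (x i)) →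
    ∃ y : Fin (2 * n) → M, Function.Injective y

section Aux

variable (M : Type) (instM : LP.Structure M) (X : Type)

/-- Structure on `M ⊕ X`: `P` holds exactly on old elements where it held. -/
def sumStructure : LP.Structure (M ⊕ X) where
  funMap := fun {n} f _ => Empty.elim f
  RelMap := fun {n} r x =>
    match n, r, x with
    | 1, _, x => ∃ m : M, x 0 = Sum.inl m ∧ PPred M instM m

lemma sumStructure_PPred (a : M ⊕ X) :
    PPred (M ⊕ X) (sumStructure M instM X) a ↔ ∃ m : M, a = Sum.inl m ∧ PPred M instM m := by
  rfl

/-- `Sum.inl` as an `LP`-embedding. -/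
def inlEmbedding : letI := instM; letI := sumStructure M instM X; M ↪[LP] (M ⊕ X) :=
  letI := instM
  letI := sumStructure M instM X
  { toFun := Sum.inl
    inj' := Sum.inl_injective
    map_fun' := fun {n} f _ => Empty.elim f
    map_rel' := by
      intro n r x
      match n, r with
      | 1, r =>
        have hx : x = ![x 0] := by
          funext i; fin_cases i; rfl
        show (∃ m : M, Sum.inl (x 0) = Sum.inl m ∧ PPred M instM m) ↔ _
        constructor
        · rintro ⟨m, hm, hP⟩
          obtain rfl : x 0 = m := Sum.inl.inj hm
          rw [hx]
          exact hP
        · intro h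
          refine ⟨x 0, rfl, ?_⟩
          rw [hx] at h
          exact h }

end Aux

/-- The theory T_2n is smooth: for every quantifier-free formula φ, model of T_2n with a
valuation satisfying φ, and cardinal κ at least the size of the model, there is a model
of T_2n of size exactly κ with a valuation satisfying φ. -/
theorem stmt_8 (α : Type) (φ : LP.Formula α) (hφ : φ.IsQF)
    (M : Type) (instM : LP.Structure M) (hM : ModelT2n M instM)
    (v : α → M) (hv : RealizeP M instM φ v)
    (κ : Cardinal) (hκ : Cardinal.mk M ≤ κ) :
    ∃ (N : Type) (instN : LP.Structure N), ModelT2n N instN ∧ Cardinal.mk N = κ ∧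
      ∃ w : α → N, RealizeP N instN φ w := by
  obtain ⟨c, rfl⟩ := exists_add_of_le hκ
  refine ⟨M ⊕ c.out, sumStructure M instM c.out, ?_, by simp [Cardinal.mk_out], ?_⟩
  · intro n hn ⟨x, hxinj, hxP⟩
    have : ∀ i, ∃ m : M, x i = Sum.inl m ∧ PPred M instM m := fun i =>
      (sumStructure_PPred M instM c.out (x i)).mp (hxP i)
    choose m hm hmP using this
    have hminj : Function.Injective m := by
      intro i j hij
      apply hxinj
      rw [hm i, hm j, hij]
    obtain ⟨y, hyinj⟩ := hM n hn ⟨m, hminj, hmP⟩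
    exact ⟨Sum.inl ∘ y, Sum.inl_injective.comp hyinj⟩
  · refine ⟨Sum.inl ∘ v, ?_⟩
    letI := instM
    letI := sumStructure M instM c.out
    have := (hφ.realize_embedding (inlEmbedding M instM c.out)
      (v := v) (xs := (default : Fin 0 → M))).mpr hv
    unfold RealizeP Formula.Realize
    convert this using 2
    rfl
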